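/- Every complex n-dimensional commutative (not necessarily associative) algebra A with dim A² = 1 is an evolution algebra; that is, A admits a basis {f_1,...,f_n} with f_i f_j = 0 for all i ≠ j. -/

import Mathlib

/-- **Commutative algebras with one-dimensional square are evolution algebras.**
Every complex `n`-dimensional commutative (not necessarily associative) algebra `A`
with `dim A² = 1` admits a basis `{f₁,...,fₙ}` with `fᵢfⱼ = 0` for `i ≠ j`. -/
theorem stmt_14 {A : Type*} [NonUnitalNonAssocRing A] [Module ℂ A]
    [SMulCommClass ℂ A A] [IsScalarTower ℂ A A] [FiniteDimensional ℂ A]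
    (hcomm : ∀ x y : A, x * y = y * x)
    {n : ℕ} (hdim : Module.finrank ℂ A = n)
    (hsq : Module.finrank ℂ
      (Submodule.span ℂ {z : A | ∃ x y : A, z = x * y}) = 1) :
    ∃ b : Module.Basis (Fin n) ℂ A, ∀ i j : Fin n, i ≠ j → b i * b j = 0 := by
  subst hdim
  set S := Submodule.span ℂ {z : A | ∃ x y : A, z = x * y} with hS
  have hmem : ∀ x y : A, x * y ∈ S := fun x y => Submodule.subset_span ⟨x, y, rfl⟩
  -- a basis of the 1-dimensional space S
  let bS : Module.Basis (Fin 1) ℂ S := Module.finBasisOfFinrankEq ℂ S hsq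
  -- the multiplication as a bilinear map into S
  let m : A →ₗ[ℂ] A →ₗ[ℂ] S := LinearMap.mk₂ ℂ (fun x y => ⟨x * y, hmem x y⟩)
    (fun x x' y => Subtype.ext (add_mul x x' y))
    (fun c x y => Subtype.ext (smul_mul_assoc c x y))
    (fun x y y' => Subtype.ext (mul_add x y y'))
    (fun c x y => Subtype.ext (mul_smul_comm c x y))
  -- the associated bilinear form
  let B : LinearMap.BilinForm ℂ A := m.compr₂ (bS.coord 0)
  have hB : ∀ x y : A, B x y = bS.repr ⟨x * y, hmem x y⟩ 0 := fun x y => rfl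
  have hBsymm : LinearMap.IsSymm B := by
    refine ⟨fun x y => ?_⟩
    simp only [RingHom.id_apply, hB, hcomm x y]
  have : Invertible (2 : ℂ) := invertibleOfNonzero two_ne_zero
  obtain ⟨v, hv⟩ := LinearMap.BilinForm.exists_orthogonal_basis hBsymm
  refine ⟨v, fun i j hij => ?_⟩
  have h0 : B (v i) (v j) = 0 := hv hij
  have hx := bS.sum_repr ⟨v i * v j, hmem _ _⟩
  rw [Fin.sum_univ_one] at hx
  have hc : bS.repr ⟨v i * v j, hmem _ _⟩ 0 = 0 := by simpa [hB] using h0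
  rw [hc, zero_smul] at hx
  exact congrArg Subtype.val hx.symm
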